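/- For every N ≥ 2 and every causal N-partite correlation P with binary inputs x_k ∈ {0,1} and binary outputs a_k ∈ {0,1} for each party, the generalized causal inequality J_2(N) ≥ 0 holds, where J_2(N) = Σ_{k=1}^N P_k(1 | x_k = 1, x_{∖k} = (0,…,0)) − P(1,…,1 | 1,…,1), with P_k(a_k|x) := Σ_{a_{∖k}} P(a|x) denoting the marginal distribution of the output of party k. -/
import Mathlib


/-- A correlation for the parties in the finite set `S`, where party `i` has input set `X i`
and output set `A i`: a real number `P x a` for each assignment of inputs `x` and outputs `a`
for the parties in `S`. -/
def Corr {ι : Type} (X A : ι → Type) (S : Finset ι) : Type :=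
  ((i : {j // j ∈ S}) → X i.1) → ((i : {j // j ∈ S}) → A i.1) → ℝ

/-- `p` is a probability distribution on the finite type `α`. -/
def IsProbDist {α : Type} [Fintype α] (p : α → ℝ) : Prop :=
  (∀ a, 0 ≤ p a) ∧ ∑ a, p a = 1

/-- Restriction of a tuple indexed by `S` to a subset `T ⊆ S`. -/
def restr {ι : Type} {X : ι → Type} {S T : Finset ι} (h : T ⊆ S)
    (x : (i : {j // j ∈ S}) → X i.1) : (i : {j // j ∈ T}) → X i.1 :=
  fun i => x ⟨i.1, h i.2⟩

theorem erase_sub {ι : Type} [DecidableEq ι] (S : Finset ι) (k : ι) : S.erase k ⊆ S :=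
  fun _ hi => Finset.mem_of_mem_erase hi

theorem sdiff_sub {ι : Type} [DecidableEq ι] (S K : Finset ι) : S \ K ⊆ S :=
  fun _ hi => (Finset.mem_sdiff.mp hi).1

/-- Combine a tuple on `K` and a tuple on `S \ K` into a tuple on `S`. -/
def glue {ι : Type} [DecidableEq ι] {X : ι → Type} {S K : Finset ι} (_ : K ⊆ S)
    (u : (i : {j // j ∈ K}) → X i.1) (v : (i : {j // j ∈ S \ K}) → X i.1) :
    (i : {j // j ∈ S}) → X i.1 :=
  fun i => if h : i.1 ∈ K then u ⟨i.1, h⟩ else v ⟨i.1, Finset.mem_sdiff.mpr ⟨i.2, h⟩⟩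

/-- Insert a value for party `k` into a tuple on `S.erase k`, giving a tuple on `S`. -/
def ins {ι : Type} [DecidableEq ι] {X : ι → Type} {S : Finset ι} {k : ι} (_ : k ∈ S)
    (xk : X k) (u : (i : {j // j ∈ S.erase k}) → X i.1) : (i : {j // j ∈ S}) → X i.1 :=
  fun i => if h : i.1 = k then cast (congrArg X h.symm) xk
    else u ⟨i.1, Finset.mem_erase.mpr ⟨h, i.2⟩⟩

/-- Causal correlations, defined by induction on the number of parties: any single-party
probability distribution is causal; a correlation on a set `S` of at least two parties is
causal iff it is a convex combination, over choices of a party `k ∈ S` acting first, of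
products of a single-party distribution for `k` with causal correlations for the remaining
parties `S.erase k` that may depend on the input and output of party `k`. -/
inductive IsCausal {ι : Type} [DecidableEq ι] (X A : ι → Type) [∀ i, Fintype (A i)] :
    (S : Finset ι) → Corr X A S → Prop
  | base (k : ι) (P : Corr X A {k}) (hP : ∀ x, IsProbDist (P x)) : IsCausal X A {k} P
  | step (S : Finset ι) (hS : 2 ≤ S.card) (P : Corr X A S)
      (q : {j // j ∈ S} → ℝ)
      (Pfirst : (k : {j // j ∈ S}) → X k.1 → A k.1 → ℝ)
      (Prest : (k : {j // j ∈ S}) → X k.1 → A k.1 → Corr X A (S.erase k.1))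
      (hq : ∀ k, 0 ≤ q k)
      (hq1 : ∑ k ∈ S.attach, q k = 1)
      (hPfirst : ∀ k xk, IsProbDist (Pfirst k xk))
      (hPrest : ∀ k xk ak, IsCausal X A (S.erase k.1) (Prest k xk ak))
      (hP : ∀ x a, P x a = ∑ k ∈ S.attach, q k * Pfirst k (x k) (a k) *
            Prest k (x k) (a k) (restr (erase_sub S k.1) x) (restr (erase_sub S k.1) a)) :
      IsCausal X A S P

section Aux

variable {ι : Type} [DecidableEq ι] {A : ι → Type} {S : Finset ι} {k : ι}

theorem ins_self (hk : k ∈ S) (ak : A k) (u : (i : {j // j ∈ S.erase k}) → A i.1) :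
    ins hk ak u ⟨k, hk⟩ = ak := by
  unfold ins
  rw [dif_pos rfl]
  exact cast_eq_iff_heq.mpr HEq.rfl

theorem ins_self' (kk : {j // j ∈ S}) (ak : A kk.1)
    (u : (i : {j // j ∈ S.erase kk.1}) → A i.1) :
    ins kk.2 ak u kk = ak := by
  obtain ⟨k, hk⟩ := kk
  exact ins_self hk ak u

theorem restr_ins (hk : k ∈ S) (ak : A k) (u : (i : {j // j ∈ S.erase k}) → A i.1) :
    restr (erase_sub S k) (ins hk ak u) = u := by
  funext ⟨i, hi⟩
  have h1 : i ≠ k := (Finset.mem_erase.mp hi).1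
  simp [restr, ins, h1]

theorem ins_restr (hk : k ∈ S) (a : (i : {j // j ∈ S}) → A i.1) :
    ins hk (a ⟨k, hk⟩) (restr (erase_sub S k) a) = a := by
  funext ⟨i, hi⟩
  by_cases h : i = k
  · subst h
    unfold ins
    rw [dif_pos rfl]
    exact cast_eq_iff_heq.mpr HEq.rfl
  · unfold ins
    rw [dif_neg h]
    rfl

/-- Splitting a tuple on `S` into the value at `k` and the rest. -/
def splitEquiv (hk : k ∈ S) :
    ((i : {j // j ∈ S}) → A i.1) ≃ (A k × ((i : {j // j ∈ S.erase k}) → A i.1)) where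
  toFun a := (a ⟨k, hk⟩, restr (erase_sub S k) a)
  invFun p := ins hk p.1 p.2
  left_inv a := ins_restr hk a
  right_inv p := by
    obtain ⟨ak, u⟩ := p
    show (ins hk ak u ⟨k, hk⟩, restr (erase_sub S k) (ins hk ak u)) = (ak, u)
    rw [ins_self hk ak u, restr_ins hk ak u]

theorem sum_split [∀ i, Fintype (A i)] (hk : k ∈ S)
    (f : ((i : {j // j ∈ S}) → A i.1) → ℝ) :
    ∑ a, f a = ∑ ak : A k, ∑ u : (i : {j // j ∈ S.erase k}) → A i.1, f (ins hk ak u) := by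
  have h1 : ∑ a, f a = ∑ p : A k × ((i : {j // j ∈ S.erase k}) → A i.1), f (ins hk p.1 p.2) :=
    Fintype.sum_equiv (splitEquiv hk) _ _ (fun a => (congrArg f (ins_restr hk a)).symm)
  rw [h1, Fintype.sum_prod_type]

theorem isCausal_norm (X : ι → Type) [∀ i, Fintype (A i)]
    {S : Finset ι} {P : Corr X A S} (h : IsCausal X A S P) :
    ∀ x, (∀ a, 0 ≤ P x a) ∧ (∑ a, P x a = 1) := by
  induction h with
  | base k P hP => exact fun x => ⟨(hP x).1, (hP x).2⟩
  | step S hS P q Pfirst Prest hq hq1 hPfirst hPrest hPeq ih =>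
    intro x
    constructor
    · intro a
      rw [hPeq]
      refine Finset.sum_nonneg fun k _ => ?_
      exact mul_nonneg (mul_nonneg (hq k) ((hPfirst k (x k)).1 (a k)))
        ((ih k (x k) (a k) (restr (erase_sub S k.1) x)).1 (restr (erase_sub S k.1) a))
    · have key : ∀ k ∈ S.attach,
          (∑ a : (i : {j // j ∈ S}) → A i.1, q k * Pfirst k (x k) (a k) *
            Prest k (x k) (a k) (restr (erase_sub S k.1) x) (restr (erase_sub S k.1) a))
          = q k := by
        intro k _
        rw [sum_split k.2]
        have step1 : ∀ ak : A k.1,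
            (∑ u : (i : {j // j ∈ S.erase k.1}) → A i.1,
              q k * Pfirst k (x k) (ins k.2 ak u k) *
              Prest k (x k) (ins k.2 ak u k) (restr (erase_sub S k.1) x)
                (restr (erase_sub S k.1) (ins k.2 ak u)))
            = q k * Pfirst k (x k) ak := by
          intro ak
          have hterm : ∀ u : (i : {j // j ∈ S.erase k.1}) → A i.1,
              q k * Pfirst k (x k) (ins k.2 ak u k) *
              Prest k (x k) (ins k.2 ak u k) (restr (erase_sub S k.1) x)
                (restr (erase_sub S k.1) (ins k.2 ak u))
              = q k * Pfirst k (x k) ak *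
                Prest k (x k) ak (restr (erase_sub S k.1) x) u := by
            intro u
            rw [ins_self' k ak u, restr_ins k.2 ak u]
          rw [Finset.sum_congr rfl fun u _ => hterm u, ← Finset.mul_sum,
            (ih k (x k) ak (restr (erase_sub S k.1) x)).2, mul_one]
        rw [Finset.sum_congr rfl fun ak _ => step1 ak, ← Finset.mul_sum,
          (hPfirst k (x k)).2, mul_one]
      calc ∑ a, P x a
          = ∑ a : (i : {j // j ∈ S}) → A i.1, ∑ k ∈ S.attach,
              q k * Pfirst k (x k) (a k) *
              Prest k (x k) (a k) (restr (erase_sub S k.1) x) (restr (erase_sub S k.1) a) :=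
            Finset.sum_congr rfl fun a _ => hPeq x a
        _ = ∑ k ∈ S.attach, ∑ a : (i : {j // j ∈ S}) → A i.1,
              q k * Pfirst k (x k) (a k) *
              Prest k (x k) (a k) (restr (erase_sub S k.1) x) (restr (erase_sub S k.1) a) :=
            Finset.sum_comm
        _ = ∑ k ∈ S.attach, q k := Finset.sum_congr rfl key
        _ = 1 := hq1

theorem isCausal_decomp (X : ι → Type) [∀ i, Fintype (A i)]
    {S : Finset ι} {P : Corr X A S} (h : IsCausal X A S P) (hS : 2 ≤ S.card) :
    ∃ (q : {j // j ∈ S} → ℝ)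
      (Pfirst : (k : {j // j ∈ S}) → X k.1 → A k.1 → ℝ)
      (Prest : (k : {j // j ∈ S}) → X k.1 → A k.1 → Corr X A (S.erase k.1)),
      (∀ k, 0 ≤ q k) ∧ (∑ k ∈ S.attach, q k = 1) ∧
      (∀ k xk, IsProbDist (Pfirst k xk)) ∧
      (∀ k xk ak, IsCausal X A (S.erase k.1) (Prest k xk ak)) ∧
      (∀ x a, P x a = ∑ k ∈ S.attach, q k * Pfirst k (x k) (a k) *
            Prest k (x k) (a k) (restr (erase_sub S k.1) x) (restr (erase_sub S k.1) a)) := by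
  cases h with
  | base k P hP => simp at hS
  | step S hS' P q Pfirst Prest hq hq1 hPfirst hPrest hPeq =>
    exact ⟨q, Pfirst, Prest, hq, hq1, hPfirst, hPrest, hPeq⟩

end Aux

/-- every causal `N`-partite correlation with binary inputs and outputs
satisfies the generalized causal inequality `J_2(N) ≥ 0`, i.e.,
`Σ_k P_k(1 | x_k = 1, x_{∖k} = (0,…,0)) - P(1,…,1 | 1,…,1) ≥ 0`,
encoding `0` as `false` and `1` as `true`. -/
theorem causal_inequality_J2 (N : ℕ) (hN : 2 ≤ N)
    (P : Corr (fun _ : Fin N => Bool) (fun _ : Fin N => Bool) Finset.univ)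
    (hP : IsCausal (fun _ : Fin N => Bool) (fun _ : Fin N => Bool) Finset.univ P) :
    0 ≤ (∑ k : Fin N, ∑ a : (i : {j // j ∈ (Finset.univ : Finset (Fin N))}) → Bool,
        if a ⟨k, Finset.mem_univ k⟩ = true then
          P (fun i => if i.1 = k then true else false) a
        else 0)
      - P (fun _ => true) (fun _ => true) := by
  classical
  have hS : 2 ≤ (Finset.univ : Finset (Fin N)).card := by simpa using hN
  obtain ⟨q, Pfirst, Prest, hq, hq1, hPfirst, hPrest, hPeq⟩ := isCausal_decomp _ hP hS
  -- Upper bound on P(1,...,1 | 1,...,1)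
  have hle1 : P (fun _ => true) (fun _ => true) ≤
      ∑ k ∈ (Finset.univ : Finset (Fin N)).attach, q k * Pfirst k true true := by
    rw [hPeq]
    apply Finset.sum_le_sum
    intro k _
    have hnn : 0 ≤ q k * Pfirst k true true :=
      mul_nonneg (hq k) ((hPfirst k true).1 true)
    have hnorm := isCausal_norm (fun _ : Fin N => Bool)
      (hPrest k true true)
      (restr (X := fun _ : Fin N => Bool) (erase_sub Finset.univ k.1) (fun _ => true))
    have h1 : Prest k true true
        (restr (X := fun _ : Fin N => Bool) (erase_sub Finset.univ k.1) (fun _ => true))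
        (restr (X := fun _ : Fin N => Bool) (erase_sub Finset.univ k.1) (fun _ => true)) ≤ 1 := by
      calc Prest k true true
            (restr (X := fun _ : Fin N => Bool) (erase_sub Finset.univ k.1) (fun _ => true))
            (restr (X := fun _ : Fin N => Bool) (erase_sub Finset.univ k.1) (fun _ => true))
          ≤ ∑ u, Prest k true true
            (restr (X := fun _ : Fin N => Bool) (erase_sub Finset.univ k.1) (fun _ => true)) u :=
            Finset.single_le_sum (fun u _ => hnorm.1 u) (Finset.mem_univ _)
        _ = 1 := hnorm.2
    exact mul_le_of_le_one_right hnn h1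
  -- Lower bound on the sum of marginals
  have hle2 : ∑ k ∈ (Finset.univ : Finset (Fin N)).attach, q k * Pfirst k true true ≤
      ∑ k : Fin N, ∑ a : (i : {j // j ∈ (Finset.univ : Finset (Fin N))}) → Bool,
        if a ⟨k, Finset.mem_univ k⟩ = true then
          P (fun i => if i.1 = k then true else false) a
        else 0 := by
    rw [← Finset.sum_attach (Finset.univ : Finset (Fin N))
      (fun k => ∑ a : (i : {j // j ∈ (Finset.univ : Finset (Fin N))}) → Bool,
        if a ⟨k, Finset.mem_univ k⟩ = true then
          P (fun i => if i.1 = k then true else false) a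
        else 0)]
    apply Finset.sum_le_sum
    intro k _
    set x : (i : {j // j ∈ (Finset.univ : Finset (Fin N))}) → Bool :=
      fun i => if i.1 = k.1 then true else false with hxdef
    have hxk : x k = true := if_pos rfl
    have hsplit := sum_split (ι := Fin N) (A := fun _ => Bool) k.2
      (fun a => if a k = true then q k * Pfirst k (x k) (a k) *
        Prest k (x k) (a k) (restr (X := fun _ : Fin N => Bool) (erase_sub Finset.univ k.1) x)
        (restr (X := fun _ : Fin N => Bool) (erase_sub Finset.univ k.1) a) else 0)
    have hterm : ∀ (ak : Bool) (u : (i : {j // j ∈ Finset.univ.erase k.1}) → Bool),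
        (if ins (X := fun _ : Fin N => Bool) k.2 ak u k = true then
          q k * Pfirst k (x k) (ins (X := fun _ : Fin N => Bool) k.2 ak u k) *
          Prest k (x k) (ins (X := fun _ : Fin N => Bool) k.2 ak u k)
            (restr (X := fun _ : Fin N => Bool) (erase_sub Finset.univ k.1) x)
            (restr (X := fun _ : Fin N => Bool) (erase_sub Finset.univ k.1)
              (ins (X := fun _ : Fin N => Bool) k.2 ak u)) else 0)
        = (if ak = true then q k * Pfirst k true ak * Prest k true ak
            (restr (X := fun _ : Fin N => Bool) (erase_sub Finset.univ k.1) x) u else 0) := by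
      intro ak u
      rw [ins_self', restr_ins, hxk]
    have h2 : (∑ ak : Bool, ∑ u : (i : {j // j ∈ Finset.univ.erase k.1}) → Bool,
        if ak = true then q k * Pfirst k true ak * Prest k true ak
          (restr (X := fun _ : Fin N => Bool) (erase_sub Finset.univ k.1) x) u else 0)
        = q k * Pfirst k true true := by
      rw [Fintype.sum_bool]
      have hnorm := isCausal_norm (fun _ : Fin N => Bool) (hPrest k true true)
        (restr (X := fun _ : Fin N => Bool) (erase_sub Finset.univ k.1) x)
      simp [← Finset.mul_sum, hnorm.2]
    have hsum : (∑ a : (i : {j // j ∈ (Finset.univ : Finset (Fin N))}) → Bool,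
        if a k = true then q k * Pfirst k (x k) (a k) *
          Prest k (x k) (a k)
            (restr (X := fun _ : Fin N => Bool) (erase_sub Finset.univ k.1) x)
            (restr (X := fun _ : Fin N => Bool) (erase_sub Finset.univ k.1) a) else 0)
        = q k * Pfirst k true true :=
      hsplit.trans ((Finset.sum_congr rfl fun ak _ =>
        Finset.sum_congr rfl fun u _ => hterm ak u).trans h2)
    have step1 : ∀ a : (i : {j // j ∈ (Finset.univ : Finset (Fin N))}) → Bool,
        (if a k = true then q k * Pfirst k (x k) (a k) *
          Prest k (x k) (a k)
            (restr (X := fun _ : Fin N => Bool) (erase_sub Finset.univ k.1) x)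
            (restr (X := fun _ : Fin N => Bool) (erase_sub Finset.univ k.1) a) else 0)
        ≤ (if a k = true then P x a else 0) := by
      intro a
      by_cases h : a k = true
      · rw [if_pos h, if_pos h, hPeq]
        refine Finset.single_le_sum (f := fun j => q j * Pfirst j (x j) (a j) *
          Prest j (x j) (a j)
            (restr (X := fun _ : Fin N => Bool) (erase_sub Finset.univ j.1) x)
            (restr (X := fun _ : Fin N => Bool) (erase_sub Finset.univ j.1) a))
          (fun j _ => ?_) (Finset.mem_attach _ k)
        exact mul_nonneg (mul_nonneg (hq j) ((hPfirst j (x j)).1 (a j)))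
          ((isCausal_norm (fun _ : Fin N => Bool) (hPrest j (x j) (a j))
            (restr (X := fun _ : Fin N => Bool) (erase_sub Finset.univ j.1) x)).1
            (restr (X := fun _ : Fin N => Bool) (erase_sub Finset.univ j.1) a))
      · rw [if_neg h, if_neg h]
    calc q k * Pfirst k true true
        = ∑ a : (i : {j // j ∈ (Finset.univ : Finset (Fin N))}) → Bool,
            (if a k = true then q k * Pfirst k (x k) (a k) *
              Prest k (x k) (a k)
                (restr (X := fun _ : Fin N => Bool) (erase_sub Finset.univ k.1) x)
                (restr (X := fun _ : Fin N => Bool) (erase_sub Finset.univ k.1) a) else 0) :=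
          hsum.symm
      _ ≤ ∑ a : (i : {j // j ∈ (Finset.univ : Finset (Fin N))}) → Bool,
            (if a k = true then P x a else 0) :=
          Finset.sum_le_sum fun a _ => step1 a
  linarith [hle1, hle2]
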